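/- Let A be an integral domain with field of fractions K, H a Z-graded associative A-algebra, finitely generated and free over A, and O a valuation ring with A ⊆ O ⊆ K. For every finite-dimensional graded KH-module V = ⊕_{i∈Z} V_i and every i ∈ Z, there exists a K-basis of V_i such that the corresponding matrix representation ρ_{V_i} : KH_0 → M_{n_i}(K) (where n_i = dim_K V_i) satisfies ρ_{V_i}(h_0) ∈ M_{n_i}(O) for all h_0 ∈ H_0. Consequently, the characteristic polynomial of ρ_{V_i}(h_0) lies in O[X] for all h_0 ∈ H_0 and all i ∈ Z. -/

import Mathlib

universe u

open DirectSum Function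

section Core
variable {K : Type*} [Field K] (O : ValuationSubring K)

lemma pivot_lemma {ι : Type*} (s : Finset ι) (g : ι → K) (hne : ∃ j ∈ s, g j ≠ 0) :
    ∃ j ∈ s, g j ≠ 0 ∧ ∀ k ∈ s, g k * (g j)⁻¹ ∈ O := by
  classical
  induction s using Finset.induction_on with
  | empty => obtain ⟨j, hj, _⟩ := hne; exact absurd hj (by simp)
  | @insert a s ha ih =>
    by_cases hs : ∃ j ∈ s, g j ≠ 0
    · obtain ⟨j, hj, hj0, hdiv⟩ := ih hs
      by_cases hO : g a * (g j)⁻¹ ∈ O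
      · refine ⟨j, Finset.mem_insert_of_mem hj, hj0, fun k hk => ?_⟩
        rcases Finset.mem_insert.mp hk with rfl | hk
        · exact hO
        · exact hdiv k hk
      · have ha0 : g a ≠ 0 := by
          intro h
          exact hO (by rw [h, zero_mul]; exact zero_mem O)
        have hinv : g j * (g a)⁻¹ ∈ O := by
          rcases O.mem_or_inv_mem (g a * (g j)⁻¹) with h | h
          · exact absurd h hO
          · rwa [mul_inv_rev, inv_inv] at h
        refine ⟨a, Finset.mem_insert_self a s, ha0, fun k hk => ?_⟩
        rcases Finset.mem_insert.mp hk with rfl | hk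
        · rw [mul_inv_cancel₀ ha0]; exact one_mem O
        · have : g k * (g a)⁻¹ = (g k * (g j)⁻¹) * (g j * (g a)⁻¹) := by
            field_simp
          rw [this]
          exact mul_mem (hdiv k hk) hinv
    · push_neg at hs
      obtain ⟨j, hj, hj0⟩ := hne
      rcases Finset.mem_insert.mp hj with rfl | hjs
      · refine ⟨j, Finset.mem_insert_self j s, hj0, fun k hk => ?_⟩
        rcases Finset.mem_insert.mp hk with rfl | hk
        · rw [mul_inv_cancel₀ hj0]; exact one_mem O
        · rw [hs k hk, zero_mul]; exact zero_mem O
      · exact absurd (hs j hjs) hj0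

variable {W : Type*} [AddCommGroup W] [Module K W]

/-- The set of `O`-linear combinations of the family `x`. -/
def Lset {N : ℕ} (x : Fin N → W) : Set W :=
  {v | ∃ c : Fin N → K, (∀ k, c k ∈ O) ∧ v = ∑ k, c k • x k}

lemma core_lemma : ∀ (N : ℕ) (x : Fin N → W),
    ∃ (n : ℕ) (b : Fin n → W), LinearIndependent K b ∧
      Submodule.span K (Set.range b) = Submodule.span K (Set.range x) ∧
      (∀ m, b m ∈ Lset O x) ∧
      (∀ v ∈ Lset O x, ∃ d : Fin n → K, (∀ m, d m ∈ O) ∧ v = ∑ m, d m • b m) := by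
  intro N
  induction N with
  | zero =>
    intro x
    refine ⟨0, x, linearIndependent_empty_type, rfl, fun m => m.elim0, fun v hv => ?_⟩
    obtain ⟨c, hc, rfl⟩ := hv
    exact ⟨c, hc, rfl⟩
  | succ N ih =>
    intro x
    classical
    by_cases hli : LinearIndependent K x
    · refine ⟨N + 1, x, hli, rfl, fun m => ?_, fun v hv => ?_⟩
      · refine ⟨fun k => if k = m then 1 else 0, fun k => ?_, ?_⟩
        · by_cases hk : k = m <;> simp [hk, one_mem, zero_mem]
        · simp [ite_smul]
      · obtain ⟨c, hc, rfl⟩ := hv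
        exact ⟨c, hc, rfl⟩
    · obtain ⟨g, hsum, j₀, hj₀⟩ := Fintype.not_linearIndependent_iff.mp hli
      obtain ⟨j, -, hgj, hdiv⟩ :=
        pivot_lemma O Finset.univ g ⟨j₀, Finset.mem_univ _, hj₀⟩
      set r : Fin N → K := fun k => -(g (j.succAbove k) * (g j)⁻¹) with hr
      have hrO : ∀ k, r k ∈ O := fun k => neg_mem (hdiv _ (Finset.mem_univ _))
      set x' : Fin N → W := x ∘ j.succAbove with hx'
      have hrel : x j = ∑ k, r k • x' k := by
        have h1 : g j • x j + ∑ k, g (j.succAbove k) • x (j.succAbove k) = 0 := by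
          rw [← Fin.sum_univ_succAbove (fun i => g i • x i) j]; exact hsum
        have h2 : g j • x j = -∑ k, g (j.succAbove k) • x (j.succAbove k) :=
          eq_neg_of_add_eq_zero_left h1
        have h3 : x j = (g j)⁻¹ • (g j • x j) := (inv_smul_smul₀ hgj _).symm
        rw [h3, h2, smul_neg, Finset.smul_sum, ← Finset.sum_neg_distrib]
        refine Finset.sum_congr rfl fun k _ => ?_
        simp [hr, hx', smul_smul, mul_comm, neg_smul]
      obtain ⟨n, b, hbli, hbspan, hbL, hbco⟩ := ih x'
      have hLsub : Lset O x' ⊆ Lset O x := by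
        rintro v ⟨c', hc', rfl⟩
        set C : Fin (N + 1) → K := j.insertNth (0 : K) c' with hC
        refine ⟨C, fun k => ?_, ?_⟩
        · rcases eq_or_ne k j with rfl | hk
          · rw [hC, Fin.insertNth_apply_same]; exact zero_mem O
          · obtain ⟨l, rfl⟩ := Fin.exists_succAbove_eq hk
            rw [hC, Fin.insertNth_apply_succAbove]; exact hc' l
        · rw [Fin.sum_univ_succAbove (fun i => C i • x i) j]
          simp [hC, Fin.insertNth_apply_same, Fin.insertNth_apply_succAbove, hx']
      have hLsup : Lset O x ⊆ Lset O x' := by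
        rintro v ⟨c, hc, rfl⟩
        refine ⟨fun k => c j * r k + c (j.succAbove k), fun k =>
          add_mem (mul_mem (hc j) (hrO k)) (hc _), ?_⟩
        rw [Fin.sum_univ_succAbove (fun i => c i • x i) j, hrel, Finset.smul_sum]
        rw [← Finset.sum_add_distrib]
        refine Finset.sum_congr rfl fun k _ => ?_
        simp [add_smul, smul_smul, hx']
      have hspan' : Submodule.span K (Set.range x') = Submodule.span K (Set.range x) := by
        apply le_antisymm
        · exact Submodule.span_mono (Set.range_comp_subset_range _ _)
        · rw [Submodule.span_le]
          rintro - ⟨i, rfl⟩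
          rcases eq_or_ne i j with rfl | hi
          · rw [hrel]
            exact Submodule.sum_mem _ fun k _ =>
              Submodule.smul_mem _ _ (Submodule.subset_span ⟨k, rfl⟩)
          · obtain ⟨l, rfl⟩ := Fin.exists_succAbove_eq hi
            exact Submodule.subset_span ⟨l, rfl⟩
      exact ⟨n, b, hbli, hbspan.trans hspan', fun m => hLsub (hbL m),
        fun v hv => hbco v (hLsup hv)⟩

end Core


/-! ## Modules over `S ⊗_A H`

For an `A`-algebra `H` and a commutative `A`-algebra `S`, a (finitely generated) module over
the `S`-algebra `S ⊗_A H` is the same thing as an `S`-module together with a commuting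
`H`-action such that the two induced `A`-actions agree.  We package this data in a structure. -/

structure ModPkg (A : Type u) [CommRing A] (H : Type u) [Ring H] [Algebra A H]
    (S : Type u) [CommRing S] [Algebra A S] : Type (u + 1) where
  carrier : Type u
  [acg : AddCommGroup carrier]
  [modS : Module S carrier]
  [modH : Module H carrier]
  smul_comm' : ∀ (h : H) (s : S) (x : carrier), h • s • x = s • h • x
  compat : ∀ (a : A) (x : carrier), (algebraMap A H a) • x = (algebraMap A S a) • x
  [fin : Module.Finite S carrier]

attribute [instance] ModPkg.acg ModPkg.modS ModPkg.modH ModPkg.fin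

section Ungraded

variable {A : Type u} [CommRing A] {H : Type u} [Ring H] [Algebra A H]
  {S : Type u} [CommRing S] [Algebra A S]

namespace ModPkg

/-- A subgroup stable under both scalar actions, i.e. an `S ⊗_A H`-submodule. -/
def IsStable (M : ModPkg A H S) (p : AddSubgroup M.carrier) : Prop :=
  (∀ (s : S), ∀ x ∈ p, s • x ∈ p) ∧ (∀ (h : H), ∀ x ∈ p, h • x ∈ p)

/-- Simplicity of an `S ⊗_A H`-module. -/
def Simple (M : ModPkg A H S) : Prop :=
  Nontrivial M.carrier ∧ ∀ p : AddSubgroup M.carrier, M.IsStable p → p = ⊥ ∨ p = ⊤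

/-- Isomorphism of `S ⊗_A H`-modules. -/
def Iso (M N : ModPkg A H S) : Prop :=
  ∃ e : M.carrier ≃+ N.carrier,
    (∀ (s : S) (x : M.carrier), e (s • x) = s • e x) ∧
    (∀ (h : H) (x : M.carrier), e (h • x) = h • e x)

/-- The action of an element of `H` as an `S`-linear endomorphism. -/
noncomputable def act (M : ModPkg A H S) (h : H) : M.carrier →ₗ[S] M.carrier where
  toFun x := h • x
  map_add' x y := smul_add h x y
  map_smul' s x := by simpa using M.smul_comm' h s x

/-- The character of an `S ⊗_A H`-module, as a function on `H`. -/
noncomputable def char (M : ModPkg A H S) : H → S :=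
  fun h => LinearMap.trace S M.carrier (M.act h)

/-- The factor `q/p` is isomorphic to `M` (as `S ⊗_A H`-modules), witnessed by a surjection
`q → M` with kernel `p`. -/
def IsFactor (V : ModPkg A H S) (p q : AddSubgroup V.carrier) (M : ModPkg A H S) : Prop :=
  ∃ φ : q →+ M.carrier,
    Surjective φ ∧
    (∀ x : q, φ x = 0 ↔ (x : V.carrier) ∈ p) ∧
    (∀ (s : S) (x y : q), (y : V.carrier) = s • (x : V.carrier) → φ y = s • φ x) ∧
    (∀ (h : H) (x y : q), (y : V.carrier) = h • (x : V.carrier) → φ y = h • φ x)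

end ModPkg

/-- An (ungraded) composition series of an `S ⊗_A H`-module. -/
structure CompSeries (V : ModPkg A H S) : Type u where
  len : ℕ
  c : Fin (len + 1) → AddSubgroup V.carrier
  mono : ∀ t : Fin len, c t.castSucc ≤ c t.succ
  bot : c 0 = ⊥
  top : c (Fin.last len) = ⊤
  stable : ∀ t, V.IsStable (c t)
  steps : ∀ t : Fin len, c t.castSucc ≠ c t.succ ∧
    ∀ p : AddSubgroup V.carrier, V.IsStable p → c t.castSucc ≤ p → p ≤ c t.succ →
      p = c t.castSucc ∨ p = c t.succ

/-- The multiplicity of the simple module `M` in a composition series. -/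
noncomputable def ModPkg.mult (V : ModPkg A H S) (cs : CompSeries V) (M : ModPkg A H S) : ℕ :=
  Nat.card { t : Fin cs.len // V.IsFactor (cs.c t.castSucc) (cs.c t.succ) M }

end Ungraded

/-- The algebra `S ⊗_A H` is split: the endomorphism algebra of every simple module is `S`. -/
def SplitAlg (A : Type u) [CommRing A] (H : Type u) [Ring H] [Algebra A H]
    (S : Type u) [CommRing S] [Algebra A S] : Prop :=
  ∀ M : ModPkg A H S, M.Simple →
    ∀ f : M.carrier →+ M.carrier,
      (∀ (s : S) (x : M.carrier), f (s • x) = s • f x) →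
      (∀ (h : H) (x : M.carrier), f (h • x) = h • f x) →
      ∃ s : S, ∀ x, f x = s • x

/-- The set of irreducible characters of `S ⊗_A H`. -/
def IrrChars (A : Type u) [CommRing A] (H : Type u) [Ring H] [Algebra A H]
    (S : Type u) [CommRing S] [Algebra A S] : Set (H → S) :=
  { χ | ∃ M : ModPkg A H S, M.Simple ∧ χ = M.char }

/-! ## Graded modules over `S ⊗_A H` for a `ℤ`-graded algebra `H = ⊕ 𝒜 i` -/

structure GrMod (A : Type u) [CommRing A] (H : Type u) [Ring H] [Algebra A H]
    (𝒜 : ℤ → Submodule A H) (S : Type u) [CommRing S] [Algebra A S] : Type (u + 1) where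
  carrier : Type u
  [acg : AddCommGroup carrier]
  [modS : Module S carrier]
  [modH : Module H carrier]
  smul_comm' : ∀ (h : H) (s : S) (x : carrier), h • s • x = s • h • x
  compat : ∀ (a : A) (x : carrier), (algebraMap A H a) • x = (algebraMap A S a) • x
  [fin : Module.Finite S carrier]
  grading : ℤ → Submodule S carrier
  [decomp : DirectSum.Decomposition grading]
  grading_smul : ∀ (i j : ℤ) (h : H), h ∈ 𝒜 i → ∀ x ∈ grading j, h • x ∈ grading (i + j)

attribute [instance] GrMod.acg GrMod.modS GrMod.modH GrMod.fin GrMod.decomp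

section Graded

variable {A : Type u} [CommRing A] {H : Type u} [Ring H] [Algebra A H]
  {𝒜 : ℤ → Submodule A H} {S : Type u} [CommRing S] [Algebra A S]

namespace GrMod

/-- The underlying ungraded module of a graded module. -/
def forget (V : GrMod A H 𝒜 S) : ModPkg A H S where
  carrier := V.carrier
  acg := V.acg
  modS := V.modS
  modH := V.modH
  smul_comm' := V.smul_comm'
  compat := V.compat
  fin := V.fin

/-- The action of a degree-`0` element of `H` on the degree-`i` piece of a graded module,
as an `S`-linear endomorphism; this is the representation `ρ_{V_i}` restricted to `H_0`. -/
noncomputable def degAct (V : GrMod A H 𝒜 S) (h : 𝒜 0) (i : ℤ) :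
    V.grading i →ₗ[S] V.grading i where
  toFun x := ⟨(h : H) • (x : V.carrier), by
    simpa using V.grading_smul 0 i (h : H) h.2 (x : V.carrier) x.2⟩
  map_add' x y := by
    apply Subtype.ext
    simp [smul_add]
  map_smul' s x := by
    apply Subtype.ext
    simpa using V.smul_comm' (h : H) s (x : V.carrier)

/-- A subgroup which is an `S ⊗_A H`-submodule and is graded. -/
def IsGrSub (V : GrMod A H 𝒜 S) (p : AddSubgroup V.carrier) : Prop :=
  V.forget.IsStable p ∧
    ∀ x ∈ p, ∀ i : ℤ, ((DirectSum.decompose V.grading x i : V.grading i) : V.carrier) ∈ p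

/-- A graded module is graded-simple if it is nonzero and has no nontrivial graded submodule. -/
def GrSimple (V : GrMod A H 𝒜 S) : Prop :=
  Nontrivial V.carrier ∧ ∀ p : AddSubgroup V.carrier, V.IsGrSub p → p = ⊥ ∨ p = ⊤

/-- Isomorphism of graded modules. -/
def GrIso (V W : GrMod A H 𝒜 S) : Prop :=
  ∃ e : V.carrier ≃+ W.carrier,
    (∀ (s : S) (x : V.carrier), e (s • x) = s • e x) ∧
    (∀ (h : H) (x : V.carrier), e (h • x) = h • e x) ∧
    (∀ (i : ℤ), ∀ x ∈ V.grading i, e x ∈ W.grading i)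

/-- `W` is the shift `V⟨j⟩` of `V`, i.e. `W_i = V_{i-j}`. -/
def IsShiftOf (W V : GrMod A H 𝒜 S) (j : ℤ) : Prop :=
  ∃ e : W.carrier ≃+ V.carrier,
    (∀ (s : S) (x : W.carrier), e (s • x) = s • e x) ∧
    (∀ (h : H) (x : W.carrier), e (h • x) = h • e x) ∧
    (∀ (i : ℤ), ∀ x ∈ W.grading i, e x ∈ V.grading (i - j))

/-- The factor `q/p` of a graded module is isomorphic, as a graded module, to the shift
`M⟨n⟩` of `M`. -/
def IsFactorShift (V : GrMod A H 𝒜 S) (p q : AddSubgroup V.carrier)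
    (M : GrMod A H 𝒜 S) (n : ℤ) : Prop :=
  ∃ φ : q →+ M.carrier,
    Surjective φ ∧
    (∀ x : q, φ x = 0 ↔ (x : V.carrier) ∈ p) ∧
    (∀ (s : S) (x y : q), (y : V.carrier) = s • (x : V.carrier) → φ y = s • φ x) ∧
    (∀ (h : H) (x y : q), (y : V.carrier) = h • (x : V.carrier) → φ y = h • φ x) ∧
    (∀ (i : ℤ) (x : q), (x : V.carrier) ∈ V.grading i → φ x ∈ M.grading (i - n)) ∧
    (∀ (i : ℤ), ∀ m ∈ M.grading (i - n), ∃ x : q, (x : V.carrier) ∈ V.grading i ∧ φ x = m)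

end GrMod

/-- A graded composition series of a graded module. -/
structure GrCompSeries (V : GrMod A H 𝒜 S) : Type u where
  len : ℕ
  c : Fin (len + 1) → AddSubgroup V.carrier
  mono : ∀ t : Fin len, c t.castSucc ≤ c t.succ
  bot : c 0 = ⊥
  top : c (Fin.last len) = ⊤
  graded : ∀ t, V.IsGrSub (c t)
  steps : ∀ t : Fin len, c t.castSucc ≠ c t.succ ∧
    ∀ p : AddSubgroup V.carrier, V.IsGrSub p → c t.castSucc ≤ p → p ≤ c t.succ →
      p = c t.castSucc ∨ p = c t.succ

/-- The multiplicity `[V : M⟨n⟩]^gr` of the shifted graded simple module `M⟨n⟩` in a graded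
composition series of `V`. -/
noncomputable def GrMod.multShift (V : GrMod A H 𝒜 S) (cs : GrCompSeries V)
    (M : GrMod A H 𝒜 S) (n : ℤ) : ℕ :=
  Nat.card { t : Fin cs.len // V.IsFactorShift (cs.c t.castSucc) (cs.c t.succ) M n }

/-- The graded decomposition number `∑_n q^n [V : M⟨n⟩]^gr ∈ ℕ[q,q⁻¹]`. -/
noncomputable def GrMod.entryPoly (V : GrMod A H 𝒜 S) (cs : GrCompSeries V)
    (M : GrMod A H 𝒜 S) : LaurentPolynomial ℕ :=
  ∑ᶠ n : ℤ, (V.multShift cs M n) • LaurentPolynomial.T n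

/-- A short exact sequence of graded modules (morphisms are of degree `0`). -/
structure GrSES (X Y Z : GrMod A H 𝒜 S) : Type u where
  f : X.carrier →+ Y.carrier
  g : Y.carrier →+ Z.carrier
  f_smulS : ∀ (s : S) (x : X.carrier), f (s • x) = s • f x
  f_smulH : ∀ (h : H) (x : X.carrier), f (h • x) = h • f x
  g_smulS : ∀ (s : S) (y : Y.carrier), g (s • y) = s • g y
  g_smulH : ∀ (h : H) (y : Y.carrier), g (h • y) = h • g y
  inj : Injective f
  surj : Surjective g
  exact : ∀ y : Y.carrier, g y = 0 ↔ ∃ x, f x = y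
  f_graded : ∀ (i : ℤ), ∀ x ∈ X.grading i, f x ∈ Y.grading i
  g_graded : ∀ (i : ℤ), ∀ y ∈ Y.grading i, g y ∈ Z.grading i

end Graded

/-- The defining relations of the Grothendieck group of finite-dimensional graded modules. -/
def grRelSet (A : Type u) [CommRing A] (H : Type u) [Ring H] [Algebra A H]
    (𝒜 : ℤ → Submodule A H) (S : Type u) [CommRing S] [Algebra A S] :
    Set (FreeAbelianGroup (GrMod A H 𝒜 S)) :=
  { z | ∃ X Y Z : GrMod A H 𝒜 S, Nonempty (GrSES X Y Z) ∧
      z = FreeAbelianGroup.of Y - FreeAbelianGroup.of X - FreeAbelianGroup.of Z }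

/-- The Grothendieck group `R_0(S ⊗_A H)` of finite-dimensional graded modules. -/
def Groth (A : Type u) [CommRing A] (H : Type u) [Ring H] [Algebra A H]
    (𝒜 : ℤ → Submodule A H) (S : Type u) [CommRing S] [Algebra A S] : Type (u + 1) :=
  FreeAbelianGroup (GrMod A H 𝒜 S) ⧸ AddSubgroup.closure (grRelSet A H 𝒜 S)

noncomputable instance (A : Type u) [CommRing A] (H : Type u) [Ring H] [Algebra A H]
    (𝒜 : ℤ → Submodule A H) (S : Type u) [CommRing S] [Algebra A S] :
    AddCommGroup (Groth A H 𝒜 S) :=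
  inferInstanceAs
    (AddCommGroup (FreeAbelianGroup (GrMod A H 𝒜 S) ⧸ AddSubgroup.closure (grRelSet A H 𝒜 S)))

/-- The class `[V]` of a graded module in the Grothendieck group; `R_0^+` is the set of
all such classes. -/
def GrMod.cls {A : Type u} [CommRing A] {H : Type u} [Ring H] [Algebra A H]
    {𝒜 : ℤ → Submodule A H} {S : Type u} [CommRing S] [Algebra A S]
    (V : GrMod A H 𝒜 S) : Groth A H 𝒜 S :=
  QuotientAddGroup.mk (FreeAbelianGroup.of V)

section Char

variable {A : Type u} [CommRing A] {H : Type u} [Ring H] [Algebra A H]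
  {𝒜 : ℤ → Submodule A H} {S : Type u} [CommRing S] [Algebra A S]

/-- The graded character of a graded module, as a function `H → S[t,t⁻¹]`:
it vanishes on the components of degree `≠ 0` and sends `h₀ ∈ H_0` to
`∑_i t^i χ_{V_i}(h₀)`. -/
noncomputable def GrMod.grChar [DirectSum.Decomposition 𝒜] (V : GrMod A H 𝒜 S) :
    H → LaurentPolynomial S :=
  fun h => ∑ᶠ i : ℤ, LaurentPolynomial.T i *
    LaurentPolynomial.C
      (LinearMap.trace S (V.grading i) (V.degAct (DirectSum.decompose 𝒜 h 0) i))

/-- The set of irreducible graded characters `{χ^gr_{M⟨j⟩}}`: graded characters of graded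
modules whose underlying ungraded module is simple (the grading of a simple module being
unique up to shift). -/
def IrrGrChars (A : Type u) [CommRing A] (H : Type u) [Ring H] [Algebra A H]
    (𝒜 : ℤ → Submodule A H) [DirectSum.Decomposition 𝒜]
    (S : Type u) [CommRing S] [Algebra A S] : Set (H → LaurentPolynomial S) :=
  { χ | ∃ V : GrMod A H 𝒜 S, V.forget.Simple ∧ χ = V.grChar }

end Char

section FieldCoeffs

variable {A : Type u} [CommRing A] {H : Type u} [Ring H] [Algebra A H]
  {𝒜 : ℤ → Submodule A H} {F : Type u} [Field F] [Algebra A F]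

/-- The characteristic polynomial of the action of a degree-`0` element of `H` on the
degree-`i` piece of a graded module. -/
noncomputable def GrMod.cpoly (V : GrMod A H 𝒜 F) (h : 𝒜 0) (i : ℤ) : Polynomial F :=
  LinearMap.charpoly (V.degAct h i)

/-- `L` is a graded `O ⊗_A H`-lattice in the graded `F ⊗_A H`-module `V`: an `O`-submodule,
stable under `H`, graded, finitely generated and free over `O`, any `O`-basis of which is an
`F`-basis of `V`. -/
def GrMod.IsLattice (O : ValuationSubring F) (V : GrMod A H 𝒜 F)
    (L : AddSubgroup V.carrier) : Prop :=
  (∀ c : F, c ∈ O → ∀ x ∈ L, c • x ∈ L) ∧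
  (∀ h : H, ∀ x ∈ L, h • x ∈ L) ∧
  (∀ x ∈ L, ∀ i : ℤ, ((DirectSum.decompose V.grading x i : V.grading i) : V.carrier) ∈ L) ∧
  ∃ (n : ℕ) (b : Fin n → V.carrier),
    LinearIndependent F b ∧ Submodule.span F (Set.range b) = ⊤ ∧ (∀ m, b m ∈ L) ∧
    (∀ x ∈ L, ∃ c : Fin n → F, (∀ m, c m ∈ O) ∧ x = ∑ m, c m • b m)

/-- The subgroup `J(O)·L` of a lattice `L`, where `J(O)` is the maximal ideal
(= nonunits) of the valuation ring `O`. -/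
def GrMod.mSub (O : ValuationSubring F) (V : GrMod A H 𝒜 F)
    (L : AddSubgroup V.carrier) : AddSubgroup V.carrier :=
  AddSubgroup.closure { z | ∃ c : O, ¬ IsUnit c ∧ ∃ y ∈ L, z = (c : F) • y }

/-- `φ` exhibits the graded `k ⊗_A H`-module `Y` as the modular reduction `k ⊗_O L` of the
graded `O ⊗_A H`-lattice `L`, along the surjection `π : O → k` onto the residue field. -/
def GrMod.Reduces {k : Type u} [Field k] [Algebra A k]
    (O : ValuationSubring F) (π : O →+* k)
    (V : GrMod A H 𝒜 F) (L : AddSubgroup V.carrier)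
    (Y : GrMod A H 𝒜 k) (φ : L →+ Y.carrier) : Prop :=
  Surjective φ ∧
  (∀ x : L, φ x = 0 ↔ (x : V.carrier) ∈ GrMod.mSub O V L) ∧
  (∀ (c : O) (x y : L), (y : V.carrier) = (c : F) • (x : V.carrier) → φ y = π c • φ x) ∧
  (∀ (h : H) (x y : L), (y : V.carrier) = h • (x : V.carrier) → φ y = h • φ x) ∧
  (∀ (i : ℤ) (x : L), (x : V.carrier) ∈ V.grading i → φ x ∈ Y.grading i) ∧
  (∀ i : ℤ, ∀ y ∈ Y.grading i, ∃ x : L, (x : V.carrier) ∈ V.grading i ∧ φ x = y)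

end FieldCoeffs


section MainProof

variable {A : Type u} [CommRing A] {H : Type u} [Ring H] [Algebra A H]
  {𝒜 : ℤ → Submodule A H} {K : Type u} [Field K] [Algebra A K]

lemma degAct_val [GradedAlgebra 𝒜] (V : GrMod A H 𝒜 K) (h : 𝒜 0) (i : ℤ)
    (w : V.grading i) : ((V.degAct h i w : V.grading i) : V.carrier) = (h : H) • (w : V.carrier) :=
  rfl

theorem main_aux [GradedAlgebra 𝒜] [Module.Finite A H]
    (O : ValuationSubring K) (hAO : ∀ a : A, algebraMap A K a ∈ O)
    (V : GrMod A H 𝒜 K) (i : ℤ) :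
    ∃ (n : ℕ) (b : Module.Basis (Fin n) K (V.grading i)),
        n = Module.finrank K (V.grading i) ∧
        ∀ (h : 𝒜 0) (m l : Fin n), LinearMap.toMatrix b b (V.degAct h i) m l ∈ O := by
  classical
  -- `𝒜 0` is a finitely generated `A`-module
  let π : H →ₗ[A] (𝒜 0) :=
    { toFun := fun x => DirectSum.decompose 𝒜 x 0
      map_add' := fun a b => by simp
      map_smul' := fun a b => by
        show ((DirectSum.decompose 𝒜) (a • b)) 0 = _
        rw [DirectSum.decompose_smul, RingHom.id_apply]
        rfl }
  have hπ : Surjective π := by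
    intro y
    refine ⟨(y : H), ?_⟩
    show DirectSum.decompose 𝒜 (y : H) 0 = y
    rw [DirectSum.decompose_coe, DirectSum.of_eq_same]
  have hfin : Module.Finite A (𝒜 0) := Module.Finite.of_surjective π hπ
  obtain ⟨r, g, hg⟩ := Module.Finite.exists_fin (R := A) (M := (𝒜 0))
  -- set-up on `W = V_i`
  set W := ↥(V.grading i) with hW
  let e : Module.Basis (Fin (Module.finrank K W)) K W := Module.finBasis K W
  set d := Module.finrank K W with hd
  let X : (Fin r × Fin d) ⊕ Fin d → W :=
    Sum.elim (fun p => V.degAct (g p.1) i (e p.2)) e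
  set N := Fintype.card ((Fin r × Fin d) ⊕ Fin d) with hN
  let eqv : Fin N ≃ ((Fin r × Fin d) ⊕ Fin d) := (Fintype.equivFin _).symm
  let x : Fin N → W := X ∘ eqv
  set L := Lset O x with hL
  -- closure properties of `L`
  have hmem_iota : ∀ (C : ((Fin r × Fin d) ⊕ Fin d) → K), (∀ t, C t ∈ O) →
      (∑ t, C t • X t) ∈ L := by
    intro C hC
    exact ⟨C ∘ eqv, fun k => hC _, (Equiv.sum_comp eqv (fun t => C t • X t)).symm⟩
  have hX : ∀ t, X t ∈ L := by
    intro t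
    have : X t = ∑ t', (if t' = t then (1 : K) else 0) • X t' := by simp [ite_smul]
    rw [this]
    exact hmem_iota _ (fun t' => by by_cases h : t' = t <;> simp [h, one_mem, zero_mem])
  have hzero : (0 : W) ∈ L := ⟨0, fun k => zero_mem O, by simp⟩
  have hadd : ∀ v w : W, v ∈ L → w ∈ L → v + w ∈ L := by
    rintro v w ⟨c, hc, rfl⟩ ⟨c', hc', rfl⟩
    exact ⟨c + c', fun k => add_mem (hc k) (hc' k),
      by simp [add_smul, Finset.sum_add_distrib]⟩
  have hsmul : ∀ (a : K) (v : W), a ∈ O → v ∈ L → a • v ∈ L := by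
    rintro a v ha ⟨c, hc, rfl⟩
    exact ⟨fun k => a * c k, fun k => mul_mem ha (hc k),
      by rw [Finset.smul_sum]; simp [smul_smul]⟩
  have hcomb : ∀ (M : ℕ) (c : Fin M → K) (v : Fin M → W),
      (∀ k, c k ∈ O) → (∀ k, v k ∈ L) → (∑ k, c k • v k) ∈ L := by
    intro M
    induction M with
    | zero => intro c v _ _; simpa using hzero
    | succ M ih =>
      intro c v hc hv
      rw [Fin.sum_univ_succ]
      exact hadd _ _ (hsmul _ _ (hc 0) (hv 0)) (ih _ _ (fun k => hc _) (fun k => hv _))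
  -- the seed of stability : `H_0`-orbits of the basis vectors lie in `L`
  have hC1 : ∀ (h : 𝒜 0) (j : Fin d), V.degAct h i (e j) ∈ L := by
    intro h j
    have hmem : h ∈ Submodule.span A (Set.range g) := hg ▸ Submodule.mem_top
    induction hmem using Submodule.span_induction with
    | mem h' hh' =>
      obtain ⟨k, rfl⟩ := hh'
      exact hX (Sum.inl (k, j))
    | zero =>
      have : V.degAct (0 : 𝒜 0) i (e j) = 0 := Subtype.ext (by
        rw [degAct_val]; simp)
      rw [this]; exact hzero
    | add h1 h2 hh1 hh2 ih1 ih2 =>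
      have : V.degAct (h1 + h2) i (e j) = V.degAct h1 i (e j) + V.degAct h2 i (e j) :=
        Subtype.ext (by rw [Submodule.coe_add, degAct_val, degAct_val, degAct_val,
          Submodule.coe_add, add_smul])
      rw [this]; exact hadd _ _ ih1 ih2
    | smul a h' hh' ihh =>
      have : V.degAct (a • h') i (e j) =
          (algebraMap A K a) • V.degAct h' i (e j) := by
        apply Subtype.ext
        rw [Submodule.coe_smul, degAct_val]
        show ((a • (h' : H)) • ((e j : W) : V.carrier)) = _
        rw [Algebra.smul_def, mul_smul, V.compat]
        rfl
      rw [this]; exact hsmul _ _ (hAO a) ihh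
  -- stability of `L` under the degree-zero action
  have hC2 : ∀ (h : 𝒜 0) (t : (Fin r × Fin d) ⊕ Fin d), V.degAct h i (X t) ∈ L := by
    intro h t
    match t with
    | Sum.inl (k, j) =>
      have hmul : ((h : H) * ((g k : 𝒜 0) : H)) ∈ 𝒜 0 := by
        simpa using SetLike.mul_mem_graded h.2 (g k).2
      have : V.degAct h i (V.degAct (g k) i (e j)) =
          V.degAct (⟨(h : H) * ((g k : 𝒜 0) : H), hmul⟩ : 𝒜 0) i (e j) :=
        Subtype.ext (by rw [degAct_val, degAct_val, degAct_val, mul_smul])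
      exact this ▸ hC1 _ j
    | Sum.inr j => exact hC1 h j
  have hstab : ∀ (h : 𝒜 0), ∀ v ∈ L, V.degAct h i v ∈ L := by
    rintro h v ⟨c, hc, rfl⟩
    rw [map_sum]
    simp_rw [map_smul]
    exact hcomb _ c (fun k => V.degAct h i (x k)) hc (fun k => hC2 h (eqv k))
  -- `x` spans `W`
  have hspanx : Submodule.span K (Set.range x) = ⊤ := by
    rw [eq_top_iff, ← e.span_eq]
    refine Submodule.span_mono ?_
    rintro - ⟨j, rfl⟩
    exact ⟨eqv.symm (Sum.inr j), by simp [x, X]⟩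
  obtain ⟨n, b, hli, hspanb, hbL, hco⟩ := core_lemma O N x
  rw [hspanx] at hspanb
  let bB : Module.Basis (Fin n) K W := Module.Basis.mk hli (le_of_eq hspanb.symm)
  refine ⟨n, bB, ?_, ?_⟩
  · simpa using (Module.finrank_eq_card_basis bB).symm
  · intro h m l
    rw [LinearMap.toMatrix_apply]
    have hbl : bB l = b l := by rw [Module.Basis.coe_mk]
    have hin : V.degAct h i (b l) ∈ L := hstab h _ (hbL l)
    obtain ⟨dc, hdc, hdeq⟩ := hco _ hin
    rw [hbl, hdeq]
    have : ∑ mm, dc mm • b mm = ∑ mm, dc mm • bB mm := by rw [Module.Basis.coe_mk]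
    rw [this, Module.Basis.repr_sum_self]
    exact hdc m

end MainProof

/-- For every finite-dimensional graded `K ⊗_A H`-module `V` and every
`i ∈ ℤ` there is a `K`-basis of the degree-`i` piece `V_i` in which the matrix of
`ρ_{V_i}(h₀)` has entries in `O` for every `h₀ ∈ H_0`; consequently the characteristic
polynomial of `ρ_{V_i}(h₀)` lies in `O[X]`. -/
theorem matrix_entries_in_valuation_ring
    (A : Type u) [CommRing A] [IsDomain A]
    (K : Type u) [Field K] [Algebra A K] [IsFractionRing A K]
    (H : Type u) [Ring H] [Algebra A H] [Module.Free A H] [Module.Finite A H]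
    (𝒜 : ℤ → Submodule A H) [GradedAlgebra 𝒜]
    (O : ValuationSubring K) (hAO : ∀ a : A, algebraMap A K a ∈ O)
    (V : GrMod A H 𝒜 K) :
    (∀ i : ℤ, ∃ (n : ℕ) (b : Module.Basis (Fin n) K (V.grading i)),
        n = Module.finrank K (V.grading i) ∧
        ∀ (h : 𝒜 0) (m l : Fin n), LinearMap.toMatrix b b (V.degAct h i) m l ∈ O) ∧
    (∀ (h : 𝒜 0) (i : ℤ) (m : ℕ), (V.cpoly h i).coeff m ∈ O) := by
  classical
  have main := fun i => main_aux O hAO V i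
  refine ⟨main, ?_⟩
  intro h i m
  obtain ⟨n, b, -, hb⟩ := main i
  have hcp : V.cpoly h i = (LinearMap.toMatrix b b (V.degAct h i)).charpoly :=
    (LinearMap.charpoly_toMatrix _ b).symm
  set M : Matrix (Fin n) (Fin n) K := LinearMap.toMatrix b b (V.degAct h i) with hM
  let M₀ : Matrix (Fin n) (Fin n) O := fun p q => ⟨M p q, hb h p q⟩
  have hmap : M = M₀.map O.subtype := by
    ext p q
    rfl
  rw [hcp, hmap, Matrix.charpoly_map, Polynomial.coeff_map]
  exact SetLike.coe_mem _
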